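/- Let O be any set of Boolean functions and PROP any finite set of propositional variables. Then: (1) PL_O[PROP] ≤_pc ML_{O∪{◇}}[{p}], and (2) PL_O[PROP] ≤_pc ML_{O∪{□}}[{p}], where the modal concept classes are evaluated over finite pointed Kripke models. -/

import Mathlib

set_option maxHeartbeats 1000000

/-! ### Modal formulas -/

inductive MF : Type
  | var : ℕ → MF
  | neg : MF → MF
  | and : MF → MF → MF
  | or : MF → MF → MF
  | dia : MF → MF
  | box : MF → MF

namespace MF

/-- Implication `φ → ψ`, as the abbreviation `¬φ ∨ ψ`. -/
def imp (φ ψ : MF) : MF := .or (.neg φ) ψ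

/-- Bi-implication `φ ↔ ψ`. -/
def iff (φ ψ : MF) : MF := .and (φ.imp ψ) (ψ.imp φ)

/-- `⊥` abbreviates `p ∧ ¬p`. -/
def bot : MF := .and (.var 0) (.neg (.var 0))

/-- `⊤` abbreviates `p ∨ ¬p`. -/
def top : MF := .or (.var 0) (.neg (.var 0))

/-- A formula is purely propositional if it contains no modal operators. -/
def isProp : MF → Prop
  | .var _ => True
  | .neg φ => φ.isProp
  | .and φ ψ => φ.isProp ∧ ψ.isProp
  | .or φ ψ => φ.isProp ∧ ψ.isProp
  | .dia _ => False
  | .box _ => False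

/-- Boolean evaluation (meaningful for purely propositional formulas). -/
def propEval (v : ℕ → Bool) : MF → Bool
  | .var n => v n
  | .neg φ => !(propEval v φ)
  | .and φ ψ => propEval v φ && propEval v ψ
  | .or φ ψ => propEval v φ || propEval v ψ
  | .dia φ => propEval v φ
  | .box φ => propEval v φ

/-- Propositional tautologies. -/
def isTautology (φ : MF) : Prop := φ.isProp ∧ ∀ v, φ.propEval v = true

/-- Uniform substitution. -/
def subst (σ : ℕ → MF) : MF → MF
  | .var n => σ n
  | .neg φ => .neg (φ.subst σ)
  | .and φ ψ => .and (φ.subst σ) (ψ.subst σ)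
  | .or φ ψ => .or (φ.subst σ) (ψ.subst σ)
  | .dia φ => .dia (φ.subst σ)
  | .box φ => .box (φ.subst σ)

/-- The set of propositional variables occurring in a formula. -/
def vars : MF → Set ℕ
  | .var n => {n}
  | .neg φ => φ.vars
  | .and φ ψ => φ.vars ∪ ψ.vars
  | .or φ ψ => φ.vars ∪ ψ.vars
  | .dia φ => φ.vars
  | .box φ => φ.vars

/-- Kripke satisfaction. -/
def sat {W : Type} (R : W → W → Prop) (V : ℕ → W → Prop) : MF → W → Prop
  | .var n, w => V n w
  | .neg φ, w => ¬ sat R V φ w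
  | .and φ ψ, w => sat R V φ w ∧ sat R V ψ w
  | .or φ ψ, w => sat R V φ w ∨ sat R V ψ w
  | .dia φ, w => ∃ u, R w u ∧ sat R V φ u
  | .box φ, w => ∀ u, R w u → sat R V φ u

/-- `◇^n φ`. -/
def diaIter : ℕ → MF → MF
  | 0, φ => φ
  | n + 1, φ => .dia (diaIter n φ)

/-- `□^n φ`. -/
def boxIter : ℕ → MF → MF
  | 0, φ => φ
  | n + 1, φ => .box (boxIter n φ)

/-- `◇^{≤n} φ`, the disjunction of `◇^k φ` for `0 ≤ k ≤ n`. -/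
def diaLe : ℕ → MF → MF
  | 0, φ => φ
  | n + 1, φ => .or (diaLe n φ) (diaIter (n + 1) φ)

/-- An injective numeric encoding of modal formulas. -/
def encodeMF : MF → ℕ
  | .var n => Nat.pair 0 n
  | .neg φ => Nat.pair 1 φ.encodeMF
  | .and φ ψ => Nat.pair 2 (Nat.pair φ.encodeMF ψ.encodeMF)
  | .or φ ψ => Nat.pair 3 (Nat.pair φ.encodeMF ψ.encodeMF)
  | .dia φ => Nat.pair 4 φ.encodeMF
  | .box φ => Nat.pair 5 φ.encodeMF

end MF

/-- A normal modal logic. -/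
structure NormalLogic (Λ : Set MF) : Prop where
  taut : ∀ φ, φ.isTautology → φ ∈ Λ
  axK : ∀ φ ψ, ((MF.box (φ.imp ψ)).imp ((MF.box φ).imp (MF.box ψ))) ∈ Λ
  dual : ∀ φ, ((MF.dia φ).iff (MF.neg (MF.box (MF.neg φ)))) ∈ Λ
  mp : ∀ φ ψ, φ.imp ψ ∈ Λ → φ ∈ Λ → ψ ∈ Λ
  usubst : ∀ φ (σ : ℕ → MF), φ ∈ Λ → φ.subst σ ∈ Λ
  nec : ∀ φ, φ ∈ Λ → MF.box φ ∈ Λ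

/-- Validity on the frame `F_⊙` consisting of a single reflexive world. -/
def validOnReflPoint (φ : MF) : Prop :=
  ∀ V : ℕ → Prop, MF.sat (W := Unit) (fun _ _ => True) (fun n _ => V n) φ ()

/-- Validity on the frame `F_•` consisting of a single irreflexive world. -/
def validOnIrreflPoint (φ : MF) : Prop :=
  ∀ V : ℕ → Prop, MF.sat (W := Unit) (fun _ _ => False) (fun n _ => V n) φ ()

/-- Type A: `F_⊙ ⊨ Λ`. -/
def TypeA (Λ : Set MF) : Prop := ∀ φ ∈ Λ, validOnReflPoint φ

/-- Type B: `F_• ⊨ Λ` and `Λ ⊢ □^n ⊥` for some `n ≥ 1`. -/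
def TypeB (Λ : Set MF) : Prop :=
  (∀ φ ∈ Λ, validOnIrreflPoint φ) ∧ ∃ n ≥ 1, MF.boxIter n MF.bot ∈ Λ

/-- Type C: `F_• ⊨ Λ`, `Λ ⊬ □^n ⊥` for all `n ≥ 1`, `Λ ⊢ ◇^{≤n} □⊥` for some `n ≥ 1`. -/
def TypeC (Λ : Set MF) : Prop :=
  (∀ φ ∈ Λ, validOnIrreflPoint φ) ∧ (∀ n ≥ 1, MF.boxIter n MF.bot ∉ Λ) ∧
    ∃ n ≥ 1, MF.diaLe n (MF.box MF.bot) ∈ Λ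

/-- The (expansions of the) fragment `ML_Φ`: the smallest set of modal formulas containing
all propositional variables and closed under applying the connectives given by the formulas in
`Φ` (i.e., substituting fragment formulas into a member of `Φ`). -/
inductive MLFrag (Φ : Set MF) : MF → Prop
  | var (n : ℕ) : MLFrag Φ (MF.var n)
  | app (φ : MF) (hφ : φ ∈ Φ) (σ : ℕ → MF) (hσ : ∀ n, MLFrag Φ (σ n)) :
      MLFrag Φ (φ.subst σ)

/-- Expressive containment `ML_Φ ≼^Λ ML_Ψ`. -/
def exprLe (Λ : Set MF) (Φ Ψ : Set MF) : Prop :=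
  ∀ φ, MLFrag Φ φ → ∃ ψ, MLFrag Ψ ψ ∧ (φ.iff ψ) ∈ Λ

/-- Expressive equivalence with respect to `Λ`. -/
def exprEq (Λ : Set MF) (Φ Ψ : Set MF) : Prop := exprLe Λ Φ Ψ ∧ exprLe Λ Ψ Φ

/-- The minimal normal modal logic `K`: (semantically) the set of formulas valid in all
Kripke models. -/
def KLogic : Set MF :=
  {φ | ∀ (W : Type) (R : W → W → Prop) (V : ℕ → W → Prop) (w : W), MF.sat R V φ w}

/-! ### Boolean functions and clones -/

/-- A Boolean function of positive arity. -/
structure BFun : Type where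
  arity : ℕ
  arity_pos : 0 < arity
  eval : (Fin arity → Bool) → Bool

/-- A Boolean clone: a set of Boolean functions containing all projections and
closed under composition. -/
def IsClone (C : Set BFun) : Prop :=
  (∀ (n : ℕ) (hn : 0 < n) (k : Fin n), (⟨n, hn, fun v => v k⟩ : BFun) ∈ C) ∧
  (∀ f ∈ C, ∀ (m : ℕ) (hm : 0 < m) (g : Fin (BFun.arity f) → (Fin m → Bool) → Bool),
    (∀ i, (⟨m, hm, g i⟩ : BFun) ∈ C) →
    (⟨m, hm, fun v => f.eval (fun i => g i v)⟩ : BFun) ∈ C)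

/-- The clone generated by a set of Boolean functions. -/
def cloneGen (O : Set BFun) : Set BFun := ⋂₀ {C : Set BFun | IsClone C ∧ O ⊆ C}

/-- `O ≼ O'`: the clone generated by `O` is contained in the clone generated by `O'`. -/
def cloneLe (O O' : Set BFun) : Prop := cloneGen O ⊆ cloneGen O'

/-- The constant-true unary Boolean function. -/
def bfTop : BFun := ⟨1, Nat.one_pos, fun _ => true⟩
/-- The constant-false unary Boolean function. -/
def bfBot : BFun := ⟨1, Nat.one_pos, fun _ => false⟩
/-- Negation. -/
def bfNot : BFun := ⟨1, Nat.one_pos, fun v => !(v 0)⟩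
/-- Binary conjunction. -/
def bfAnd : BFun := ⟨2, Nat.succ_pos 1, fun v => v 0 && v 1⟩
/-- Binary disjunction. -/
def bfOr : BFun := ⟨2, Nat.succ_pos 1, fun v => v 0 || v 1⟩
/-- Ternary exclusive or `x ⊕ y ⊕ z`. -/
def bf3Xor : BFun := ⟨3, Nat.succ_pos 2, fun v => (v 0).xor ((v 1).xor (v 2))⟩
/-- `oxor(x,y,z) = x ∨ (y ⊕ z)`. -/
def bfOxor : BFun := ⟨3, Nat.succ_pos 2, fun v => v 0 || ((v 1).xor (v 2))⟩
/-- `aimp(x,y,z) = x ∧ (y → z)`. -/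
def bfAimp : BFun := ⟨3, Nat.succ_pos 2, fun v => v 0 && (!(v 1) || v 2)⟩

/-- The (purely propositional) formula `φ` defines the Boolean function `f`. -/
def definesBF (φ : MF) (f : BFun) : Prop :=
  φ.isProp ∧ ∀ v : ℕ → Bool, φ.propEval v = f.eval (fun i => v i.val)

/-- The generating set of formulas of the simple fragment `ML_{M ∪ O}`, where
`M ⊆ {◇,□}` is specified by the two Booleans `hd` (for `◇`) and `hb` (for `□`). -/
def MOgen (hd hb : Bool) (O : Set BFun) : Set MF :=
  {φ | (hd = true ∧ φ = MF.dia (MF.var 0)) ∨ (hb = true ∧ φ = MF.box (MF.var 0)) ∨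
    ∃ f ∈ O, definesBF φ f}

/-- `Clos^Λ_M(O)`: the set of Boolean functions `f` such that some propositional formula
defining `f` is `Λ`-equivalent to some `ML_{M ∪ O}`-formula. -/
def Clos (Λ : Set MF) (hd hb : Bool) (O : Set BFun) : Set BFun :=
  {f | ∃ φ ψ : MF, definesBF φ f ∧ MLFrag (MOgen hd hb O) ψ ∧ (φ.iff ψ) ∈ Λ}

/-- `β(Φ)`: the set of Boolean functions defined by propositional formulas in `Φ`. -/
def betaBF (Φ : Set MF) : Set BFun := {f | ∃ φ ∈ Φ, definesBF φ f}

/-- A set of modal formulas is simple if each member is `◇x`, `□x`, or purely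
propositional. -/
def IsSimpleSet (Φ : Set MF) : Prop :=
  ∀ φ ∈ Φ, (∃ n, φ = MF.dia (MF.var n)) ∨ (∃ n, φ = MF.box (MF.var n)) ∨ φ.isProp

/-- `Φ` is `M`-simple (with `M` given by `hd`, `hb`): simple, and the modal operators
among its members are exactly those in `M`. -/
def IsMSimpleSet (hd hb : Bool) (Φ : Set MF) : Prop :=
  IsSimpleSet Φ ∧ ((∃ n, MF.dia (MF.var n) ∈ Φ) ↔ hd = true) ∧
    ((∃ n, MF.box (MF.var n) ∈ Φ) ↔ hb = true)

/-! ### Propositional fragments `PL_O` -/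

/-- Formulas of the propositional fragment `PL_O`. -/
inductive PLF (O : Set BFun) : Type
  | var : ℕ → PLF O
  | app : (f : BFun) → f ∈ O → (Fin f.arity → PLF O) → PLF O

namespace PLF

variable {O : Set BFun}

/-- Evaluation of a `PL_O`-formula under a truth assignment. -/
def eval (v : ℕ → Bool) : PLF O → Bool
  | .var n => v n
  | .app f _ args => f.eval (fun i => (args i).eval v)

/-- The variables occurring in a `PL_O`-formula. -/
def pvars : PLF O → Set ℕ
  | .var n => {n}
  | .app _ _ args => ⋃ i, (args i).pvars

/-- The set of subformulas of a `PL_O`-formula. -/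
def subf : PLF O → Set (PLF O)
  | .var n => {PLF.var n}
  | .app f h args => insert (PLF.app f h args) (⋃ i, (args i).subf)

/-- `|φ|_dag`: the number of distinct subformulas. -/
noncomputable def dagSize (φ : PLF O) : ℕ := φ.subf.ncard

/-- Equivalence of propositional formulas. -/
def equivPLF (φ ψ : PLF O) : Prop := ∀ v, φ.eval v = ψ.eval v

/-- `φ` fits the labeled example `(V, lab)`. -/
def fits (φ : PLF O) (e : (ℕ → Bool) × Bool) : Prop := φ.eval e.1 = e.2

end PLF

/-- `E` uniquely characterizes `φ` with respect to the class `L` of formulas. -/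
def uniqCharPL {O : Set BFun} (φ : PLF O) (L : Set (PLF O))
    (E : Set ((ℕ → Bool) × Bool)) : Prop :=
  (∀ e ∈ E, φ.fits e) ∧ ∀ ψ ∈ L, (∀ e ∈ E, ψ.fits e) → φ.equivPLF ψ

/-! ### Concept classes and PC-reductions -/

/-- A concept `c` fits the labeled example `(e, lab)`. -/
def ccFits {C : Type*} {E : Type*} (l : C → Set E) (c : C) (e : E × Bool) : Prop :=
  e.1 ∈ l c ↔ e.2 = true

/-- `S` uniquely characterizes the concept `c` within the concept class given by `l`. -/
def ccUniqChar {C : Type*} {E : Type*} (l : C → Set E) (c : C) (S : Set (E × Bool)) : Prop :=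
  (∀ e ∈ S, ccFits l c e) ∧ ∀ c', (∀ e ∈ S, ccFits l c' e) → l c' = l c

/-- A PC-reduction between concept classes. -/
structure PCRed {C1 : Type*} {E1 : Type*} {C2 : Type*} {E2 : Type*}
    (l1 : C1 → Set E1) (l2 : C2 → Set E2) where
  fc : C1 → C2
  he : E1 → E2
  cond1 : ∀ c e, e ∈ l1 c ↔ he e ∈ l2 (fc c)
  cond2 : ∀ e : E2, (∀ c, e ∈ l2 (fc c)) ∨ (∀ c, e ∉ l2 (fc c)) ∨
    ∃ e' : E1, {c | e ∈ l2 (fc c)} = {c | e' ∈ l1 c}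

/-- Extend an assignment on `PROP` to all variables (by `false` elsewhere). -/
def extAssign (PROP : Finset ℕ) (v : {x // x ∈ PROP} → Bool) : ℕ → Bool :=
  fun n => if h : n ∈ PROP then v ⟨n, h⟩ else false

/-- The concept class `PL_O[PROP]`: concepts are `PL_O`-formulas with variables in `PROP`,
examples are truth assignments on `PROP`. -/
def plSem (O : Set BFun) (PROP : Finset ℕ) :
    {φ : PLF O // φ.pvars ⊆ ↑PROP} → Set ({x // x ∈ PROP} → Bool) :=
  fun φ => {v | φ.1.eval (extAssign PROP v) = true}

/-! ### Simple modal fragments as syntax, and finite pointed Kripke models -/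

/-- Formulas of the simple modal fragment `ML_{M ∪ O}` (as a syntax): Boolean connectives
from `O`, plus `◇` if `hd` and `□` if `hb`. -/
inductive MLF (O : Set BFun) (hd hb : Bool) : Type
  | var : ℕ → MLF O hd hb
  | app : (f : BFun) → f ∈ O → (Fin f.arity → MLF O hd hb) → MLF O hd hb
  | dia : hd = true → MLF O hd hb → MLF O hd hb
  | box : hb = true → MLF O hd hb → MLF O hd hb

/-- Propositional application of a Boolean function to propositions. -/
def BFun.evalP (f : BFun) (P : Fin f.arity → Prop) : Prop :=
  f.eval (fun i => @decide (P i) (Classical.propDecidable _)) = true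

namespace MLF

variable {O : Set BFun} {hd hb : Bool}

/-- Kripke satisfaction for simple-fragment formulas. -/
def msat {W : Type} (R : W → W → Prop) (V : ℕ → W → Prop) :
    MLF O hd hb → W → Prop
  | .var n, w => V n w
  | .app f _ args, w => f.evalP (fun i => msat R V (args i) w)
  | .dia _ φ, w => ∃ u, R w u ∧ msat R V φ u
  | .box _ φ, w => ∀ u, R w u → msat R V φ u

/-- Variables of a simple-fragment formula. -/
def mvars : MLF O hd hb → Set ℕ
  | .var n => {n}
  | .app _ _ args => ⋃ i, (args i).mvars
  | .dia _ φ => φ.mvars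
  | .box _ φ => φ.mvars

end MLF

/-- A finite pointed Kripke model. -/
structure FPModel : Type 1 where
  W : Type
  fin : Finite W
  R : W → W → Prop
  V : ℕ → W → Prop
  pt : W

/-- The concept class `ML_{O,∘}[{p}]` (with `p` the variable `0`): concepts are
simple-fragment formulas over the single variable `p`, examples are finite pointed
Kripke models. -/
def mlSem (O : Set BFun) (hd hb : Bool) :
    {φ : MLF O hd hb // φ.mvars ⊆ {0}} → Set FPModel :=
  fun φ => {M | MLF.msat M.R M.V φ.1 M.pt}

/-- Satisfaction of a modal formula in a finite pointed Kripke model. -/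
def msatMF (M : FPModel) (φ : MF) : Prop := MF.sat M.R M.V φ M.pt

/-- A modal formula fits a labeled example (a finite pointed model with a label). -/
def fitsMF (φ : MF) (e : FPModel × Bool) : Prop := msatMF e.1 φ ↔ e.2 = true

/-- `K`-equivalence of modal formulas: truth at the same worlds of all Kripke models. -/
def KequivMF (φ ψ : MF) : Prop :=
  ∀ (W : Type) (R : W → W → Prop) (V : ℕ → W → Prop) (w : W),
    MF.sat R V φ w ↔ MF.sat R V ψ w

/-- `E` uniquely characterizes `φ` relative to the fragment `L` (with respect to `K`). -/
def uniqCharMF (φ : MF) (L : Set MF) (E : Set (FPModel × Bool)) : Prop :=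
  (∀ e ∈ E, fitsMF φ e) ∧ ∀ ψ ∈ L, (∀ e ∈ E, fitsMF ψ e) → KequivMF φ ψ

/-- `ML_Φ[P]`: the fragment generated by `Φ`, restricted to variables in `P`. -/
def fragSimple (Φ : Set MF) (P : Set ℕ) : Set MF :=
  {φ | MLFrag Φ φ ∧ φ.vars ⊆ P}

/-- `ML_{M∪O}[P]`. -/
def fragMO (hd hb : Bool) (O : Set BFun) (P : Set ℕ) : Set MF :=
  fragSimple (MOgen hd hb O) P

/-- For a simple set `Φ`: the modal operators of `Φ` are among those specified by
`hd`, `hb`, and `β(Φ)` is contained in the clone generated by `O`. -/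
def simpleLeOps (Φ : Set MF) (O : Set BFun) (hd hb : Bool) : Prop :=
  ((∃ n, MF.dia (MF.var n) ∈ Φ) → hd = true) ∧
  ((∃ n, MF.box (MF.var n) ∈ Φ) → hb = true) ∧
  cloneGen (betaBF Φ) ⊆ cloneGen O

/-- Decoding of a natural number as a labeled example (a finite pointed Kripke model with
a Boolean label). -/
def decodeEx (c : ℕ) : FPModel × Bool :=
  match Denumerable.ofNat (ℕ × List (ℕ × ℕ) × List (ℕ × ℕ) × ℕ × ℕ) c with
  | (n, edges, val, pt, b) =>
    (⟨Fin (n + 1), inferInstance,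
      fun u v => (u.val, v.val) ∈ edges,
      fun k w => (k, w.val) ∈ val,
      ⟨pt % (n + 1), Nat.mod_lt pt (Nat.succ_pos n)⟩⟩, b % 2 == 1)

/-! ### Auxiliary material for the proof of `stmt16` -/

/-- Classical truth value of a proposition. -/
noncomputable def pb (P : Prop) : Bool := @decide P (Classical.propDecidable P)

theorem pb_eq_true {P : Prop} : pb P = true ↔ P := by
  simp [pb]

theorem pb_eq {P : Prop} {b : Bool} (h : P ↔ b = true) : pb P = b := by
  cases b
  · simp only [pb, decide_eq_false_iff_not]; simp_all
  · simp only [pb, decide_eq_true_eq]; simp_all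

/-- Iterated application of a unary formula operator. -/
def iterMod {O : Set BFun} {hd hb : Bool} (D : MLF O hd hb → MLF O hd hb) :
    ℕ → MLF O hd hb → MLF O hd hb
  | 0, φ => φ
  | n + 1, φ => D (iterMod D n φ)

theorem iterMod_mvars {O : Set BFun} {hd hb : Bool} (D : MLF O hd hb → MLF O hd hb)
    (hD : ∀ φ, (D φ).mvars = φ.mvars) :
    ∀ (m : ℕ) (φ : MLF O hd hb), (iterMod D m φ).mvars = φ.mvars
  | 0, _ => rfl
  | m + 1, φ => by rw [iterMod, hD, iterMod_mvars D hD m]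

/-- Translation of a propositional formula into the modal fragment, sending the variable
`n` to `D^{idx n + 1} p`. -/
def trP {O : Set BFun} {hd hb : Bool} (D : MLF O hd hb → MLF O hd hb) (idx : ℕ → ℕ) :
    PLF O → MLF O hd hb
  | .var n => iterMod D (idx n + 1) (.var 0)
  | .app f h args => .app f h (fun i => trP D idx (args i))

theorem trP_mvars {O : Set BFun} {hd hb : Bool} (D : MLF O hd hb → MLF O hd hb)
    (hD : ∀ φ, (D φ).mvars = φ.mvars) (idx : ℕ → ℕ) :
    ∀ φ : PLF O, (trP D idx φ).mvars ⊆ {0} := by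
  intro φ
  induction φ with
  | var n =>
      rw [trP, iterMod_mvars D hD]
      intro x hx
      exact hx
  | app f h args ih =>
      rw [trP, MLF.mvars]
      exact Set.iUnion_subset fun i => ih i

theorem eval_congr {O : Set BFun} (φ : PLF O) : ∀ {u u' : ℕ → Bool},
    (∀ n ∈ φ.pvars, u n = u' n) → φ.eval u = φ.eval u' := by
  induction φ with
  | var n =>
      intro u u' h
      exact h n rfl
  | app f hf args ih =>
      intro u u' h
      simp only [PLF.eval]
      congr 1
      funext i
      exact ih i fun n hn => h n (Set.mem_iUnion.mpr ⟨i, hn⟩)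

/-- Master lemma: in any model, the translated formula is true iff the original formula
evaluates to true under the assignment reading off the truth of the atoms' translations. -/
theorem trP_sat {O : Set BFun} {hd hb : Bool} (D : MLF O hd hb → MLF O hd hb)
    (idx : ℕ → ℕ) {W : Type} (R : W → W → Prop) (V : ℕ → W → Prop) (w : W)
    (φ : PLF O) :
    MLF.msat R V (trP D idx φ) w ↔
      φ.eval (fun n => pb (MLF.msat R V (iterMod D (idx n + 1) (.var 0)) w)) = true := by
  induction φ with
  | var n =>
      rw [trP, PLF.eval, pb_eq_true]
  | app f hf args ih =>
      rw [trP, PLF.eval]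
      show BFun.evalP f _ ↔ _
      rw [BFun.evalP]
      constructor
      · intro h
        rw [← h]
        congr 1
        funext i
        exact (pb_eq (ih i)).symm
      · intro h
        rw [← h]
        congr 1
        funext i
        exact pb_eq (ih i)

/-! ### The chain model encoding an assignment -/

/-- Worlds of the chain model over list `L`. -/
abbrev chainW (L : List ℕ) : Type := Fin (L.length + 1)

/-- The successor relation on the chain. -/
def chainR (L : List ℕ) : chainW L → chainW L → Prop :=
  fun i j => (j : ℕ) = (i : ℕ) + 1

/-- Valuation of the chain model: `p` holds at world `i + 1` iff `A (L[i])` is true. -/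
def chainV (L : List ℕ) (A : ℕ → Bool) : ℕ → chainW L → Prop :=
  fun k w => k = 0 ∧ 1 ≤ (w : ℕ) ∧ A (L.getD ((w : ℕ) - 1) 0) = true

theorem chain_dia {O : Set BFun} (L : List ℕ) (A : ℕ → Bool) :
    ∀ (m : ℕ) (φ : MLF O true false) (a : ℕ) (h : a + m ≤ L.length),
      MLF.msat (chainR L) (chainV L A) (iterMod (MLF.dia rfl) m φ)
          ⟨a, by omega⟩ ↔
        MLF.msat (chainR L) (chainV L A) φ ⟨a + m, by omega⟩ := by
  intro m
  induction m with
  | zero => intro φ a h; simp [iterMod]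
  | succ m ih =>
      intro φ a h
      rw [iterMod]
      show (∃ u, chainR L ⟨a, by omega⟩ u ∧ _) ↔ _
      constructor
      · rintro ⟨u, hu, hsat⟩
        have : u = (⟨a + 1, by omega⟩ : chainW L) := by
          apply Fin.ext; exact hu
        subst this
        have := (ih φ (a + 1) (by omega)).mp hsat
        convert this using 2
        omega
      · intro hsat
        refine ⟨⟨a + 1, by omega⟩, rfl, ?_⟩
        apply (ih φ (a + 1) (by omega)).mpr
        convert hsat using 2
        omega

theorem chain_box {O : Set BFun} (L : List ℕ) (A : ℕ → Bool) :
    ∀ (m : ℕ) (φ : MLF O false true) (a : ℕ) (h : a + m ≤ L.length),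
      MLF.msat (chainR L) (chainV L A) (iterMod (MLF.box rfl) m φ)
          ⟨a, by omega⟩ ↔
        MLF.msat (chainR L) (chainV L A) φ ⟨a + m, by omega⟩ := by
  intro m
  induction m with
  | zero => intro φ a h; simp [iterMod]
  | succ m ih =>
      intro φ a h
      rw [iterMod]
      show (∀ u, chainR L ⟨a, by omega⟩ u → _) ↔ _
      constructor
      · intro hall
        have hsat := hall ⟨a + 1, by omega⟩ rfl
        have := (ih φ (a + 1) (by omega)).mp hsat
        convert this using 2
        omega
      · intro hsat u hu
        have : u = (⟨a + 1, by omega⟩ : chainW L) := by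
          apply Fin.ext; exact hu
        subst this
        apply (ih φ (a + 1) (by omega)).mpr
        convert hsat using 2
        omega

/-- Construction of the PC-reduction, uniform in the modality. -/
theorem buildRed {O : Set BFun} {hd hb : Bool} (PROP : Finset ℕ)
    (D : MLF O hd hb → MLF O hd hb)
    (hDv : ∀ φ, (D φ).mvars = φ.mvars)
    (hchain : ∀ (A : ℕ → Bool) (m : ℕ) (hm : m ≤ (PROP.sort (· ≤ ·)).length),
      (MLF.msat (chainR (PROP.sort (· ≤ ·))) (chainV (PROP.sort (· ≤ ·)) A)
          (iterMod D m (.var 0)) ⟨0, Nat.succ_pos _⟩ ↔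
        chainV (PROP.sort (· ≤ ·)) A 0 ⟨m, by omega⟩)) :
    Nonempty (PCRed (plSem O PROP) (mlSem O hd hb)) := by
  classical
  set L : List ℕ := PROP.sort (· ≤ ·) with hL
  set idx : ℕ → ℕ := fun n => L.idxOf n with hidx
  -- key fact about variables in PROP
  have hmemL : ∀ n ∈ PROP, n ∈ L := by
    intro n hn
    rw [hL, Finset.mem_sort]
    exact hn
  have hidxlt : ∀ n ∈ PROP, idx n < L.length := fun n hn =>
    List.idxOf_lt_length_iff.mpr (hmemL n hn)
  have hgetD : ∀ n ∈ PROP, L.getD (idx n) 0 = n := by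
    intro n hn
    rw [List.getD_eq_getElem L 0 (hidxlt n hn)]
    exact List.getElem_idxOf (hidxlt n hn)
  -- the key computation: truth of the atom translation at the chain model
  have hkey : ∀ (A : ℕ → Bool) (n : ℕ), n ∈ PROP →
      (MLF.msat (chainR L) (chainV L A) (iterMod D (idx n + 1) (.var 0))
          ⟨0, Nat.succ_pos _⟩ ↔ A n = true) := by
    intro A n hn
    rw [hchain A (idx n + 1) (by have := hidxlt n hn; exact this)]
    unfold chainV
    simp only [true_and]
    constructor
    · rintro ⟨-, h⟩
      rwa [show (idx n + 1) - 1 = idx n by omega, hgetD n hn] at h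
    · intro h
      refine ⟨by omega, ?_⟩
      rwa [show (idx n + 1) - 1 = idx n by omega, hgetD n hn]
  refine ⟨⟨fun c => ⟨trP D idx c.1, trP_mvars D hDv idx c.1⟩,
    fun v => ⟨chainW L, inferInstance, chainR L, chainV L (extAssign PROP v),
      ⟨0, Nat.succ_pos _⟩⟩, ?_, ?_⟩⟩
  · -- cond1
    intro c v
    simp only [plSem, mlSem, Set.mem_setOf_eq]
    rw [trP_sat]
    constructor
    · intro h
      rw [← h]
      apply eval_congr
      intro n hn
      have hnP : n ∈ PROP := c.2 hn
      exact pb_eq (hkey (extAssign PROP v) n hnP)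
    · intro h
      rw [← h]
      apply eval_congr
      intro n hn
      have hnP : n ∈ PROP := c.2 hn
      exact (pb_eq (hkey (extAssign PROP v) n hnP)).symm
  · -- cond2
    intro M
    right; right
    refine ⟨fun x => pb (MLF.msat M.R M.V (iterMod D (idx x.1 + 1) (.var 0)) M.pt), ?_⟩
    ext c
    simp only [plSem, mlSem, Set.mem_setOf_eq]
    rw [trP_sat]
    constructor
    · intro h
      rw [← h]
      apply eval_congr
      intro n hn
      have hnP : n ∈ PROP := c.2 hn
      rw [extAssign, dif_pos hnP]
    · intro h
      rw [← h]
      apply eval_congr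
      intro n hn
      have hnP : n ∈ PROP := c.2 hn
      rw [extAssign, dif_pos hnP]

theorem stmt16 (O : Set BFun) (PROP : Finset ℕ) :
    Nonempty (PCRed (plSem O PROP) (mlSem O true false)) ∧
    Nonempty (PCRed (plSem O PROP) (mlSem O false true)) := by
  constructor
  · exact buildRed PROP (MLF.dia rfl) (fun _ => rfl)
      (fun A m hm => by
        have := chain_dia (O := O) (PROP.sort (· ≤ ·)) A m (.var 0) 0 (by omega)
        simpa [MLF.msat] using this)
  · exact buildRed PROP (MLF.box rfl) (fun _ => rfl)
      (fun A m hm => by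
        have := chain_box (O := O) (PROP.sort (· ≤ ·)) A m (.var 0) 0 (by omega)
        simpa [MLF.msat] using this)
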